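/- Every multiset partition of {1^k,1'^k} has rank at most 2k, and consequently, if n ≥ 2k, then the dimension of the space of S_n-equivariant linear endomorphisms of F[M(n,k)] (≅ End_{S_n}(Sym^k(F^n))) equals the total number of multiset partitions of {1^k,1'^k}, i.e., the number of multisets of pairs (p,q) of non-negative integers with (p,q) ≠ (0,0) whose first coordinates sum to k and whose second coordinates sum to k. -/

import Mathlib

/-- `M(n,k)`: the set of `n`-tuples of non-negative integers summing to `k`. -/
abbrev Mnk (n k : ℕ) : Type := {a : Fin n → ℕ // ∑ i, a i = k}

instance (n k : ℕ) : Fintype (Mnk n k) :=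
  Fintype.subtype (Finset.Nat.antidiagonalTuple n k) fun _ =>
    Finset.Nat.mem_antidiagonalTuple

/-- The action of a permutation `w ∈ S_n` on `M(n,k)`: `(w • a)_i = a_{w⁻¹(i)}`. -/
def permA {n k : ℕ} (w : Equiv.Perm (Fin n)) (a : Mnk n k) : Mnk n k :=
  ⟨fun i => a.1 (w⁻¹ i), (Equiv.sum_comp w⁻¹ a.1).trans a.2⟩

/-- `E(a,b)`: the multiset `{(a_1,b_1),…,(a_n,b_n)}` with all copies of `(0,0)` removed. -/
def Epairs {n k : ℕ} (a b : Mnk n k) : Multiset (ℕ × ℕ) :=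
  (Multiset.map (fun i => (a.1 i, b.1 i)) Finset.univ.val).filter fun p => p ≠ (0, 0)

/-- A multiset partition of `{1^k, 1'^k}`, encoded as a multiset of pairs `(p,q)` of
non-negative integers, each pair `≠ (0,0)`, with first coordinates summing to `k` and
second coordinates summing to `k`. -/
def IsMSP (k : ℕ) (m : Multiset (ℕ × ℕ)) : Prop :=
  (0, 0) ∉ m ∧ (m.map Prod.fst).sum = k ∧ (m.map Prod.snd).sum = k

/-- The space of `S_n`-equivariant linear endomorphisms of `F[M(n,k)] ≅ Sym^k(F^n)`. -/
def EquivariantEnd (F : Type) [Field F] (n k : ℕ) :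
    Submodule F (Module.End F (Mnk n k → F)) where
  carrier := {T | ∀ (w : Equiv.Perm (Fin n)) (f : Mnk n k → F) (a : Mnk n k),
    T (fun x => f (permA w x)) a = T f (permA w a)}
  add_mem' := fun hT hS w f a => by
    simp only [LinearMap.add_apply, Pi.add_apply]
    rw [hT w f a, hS w f a]
  zero_mem' := fun w f a => by simp
  smul_mem' := fun c T hT w f a => by
    simp only [LinearMap.smul_apply, Pi.smul_apply]
    rw [hT w f a]

namespace Stmt5Aux

@[simp] lemma permA_permA {n k : ℕ} (w v : Equiv.Perm (Fin n)) (a : Mnk n k) :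
    permA w (permA v a) = permA (w * v) a := by
  apply Subtype.ext; funext i; simp [permA, mul_inv_rev]

@[simp] lemma permA_one {n k : ℕ} (a : Mnk n k) : permA 1 a = a := by
  apply Subtype.ext; funext i; simp [permA]

lemma permA_inj {n k : ℕ} (w : Equiv.Perm (Fin n)) {a b : Mnk n k}
    (h : permA w a = permA w b) : a = b := by
  have := congrArg (permA w⁻¹) h
  simpa using this

def mnkRel (n k : ℕ) : Setoid (Mnk n k × Mnk n k) where
  r p q := ∃ w : Equiv.Perm (Fin n), (permA w p.1, permA w p.2) = q
  iseqv := ⟨fun p => ⟨1, by simp⟩,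
    fun {p q} h => by
      obtain ⟨w, h⟩ := h
      exact ⟨w⁻¹, by rw [← h]; simp⟩,
    fun {p q r} h h' => by
      obtain ⟨w, h⟩ := h; obtain ⟨v, h'⟩ := h'
      exact ⟨v * w, by rw [← h', ← h]; simp⟩⟩

def permAEquiv {n k : ℕ} (w : Equiv.Perm (Fin n)) : Mnk n k ≃ Mnk n k :=
  ⟨permA w, permA w⁻¹, fun x => by simp, fun x => by simp⟩

@[simp] lemma permAEquiv_apply {n k : ℕ} (w : Equiv.Perm (Fin n)) (a : Mnk n k) :
    permAEquiv w a = permA w a := rfl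

variable (F : Type) [Field F] (n k : ℕ)

/-- The submodule of invariant kernels. -/
def InvK : Submodule F (Mnk n k × Mnk n k → F) where
  carrier := {K | ∀ (w : Equiv.Perm (Fin n)) (p : Mnk n k × Mnk n k),
    K (permA w p.1, permA w p.2) = K p}
  add_mem' := fun hK hL w p => by simp [hK w p, hL w p]
  zero_mem' := fun w p => rfl
  smul_mem' := fun c K hK w p => by simp [hK w p]

variable {F n k}

/-- The endomorphism with kernel `K`. -/
def mkEnd (K : Mnk n k × Mnk n k → F) : Module.End F (Mnk n k → F) where
  toFun f := fun a => ∑ b, K (a, b) * f b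
  map_add' f g := by
    funext a
    simp [mul_add, Finset.sum_add_distrib]
  map_smul' c f := by
    funext a
    simp [Finset.mul_sum, mul_left_comm]

lemma mkEnd_mem {K : Mnk n k × Mnk n k → F} (hK : K ∈ InvK F n k) :
    mkEnd K ∈ EquivariantEnd F n k := by
  intro w f a
  show ∑ b, K (a, b) * f (permA w b) = ∑ b, K (permA w a, b) * f b
  rw [← Equiv.sum_comp (permAEquiv w) (fun b => K (permA w a, b) * f b)]
  apply Finset.sum_congr rfl
  intro b _
  show K (a, b) * f (permA w b) = K (permA w a, permAEquiv w b) * f (permAEquiv w b)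
  rw [permAEquiv_apply, hK w (a, b)]

/-- delta function -/
def dlt (b : Mnk n k) : Mnk n k → F := fun x => if b = x then 1 else 0

lemma matrix_mem {T : Module.End F (Mnk n k → F)} (hT : T ∈ EquivariantEnd F n k) :
    (fun p : Mnk n k × Mnk n k => T (dlt p.2) p.1) ∈ InvK F n k := by
  intro w p
  show T (dlt (permA w p.2)) (permA w p.1) = T (dlt p.2) p.1
  rw [← hT w (dlt (permA w p.2)) p.1]
  have harg : (fun x => dlt (permA w p.2) (permA w x)) = (dlt p.2 : Mnk n k → F) := by
    funext x
    unfold dlt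
    by_cases h : x = p.2
    · subst h; simp
    · rw [if_neg (fun hc => h (permA_inj w hc).symm), if_neg (fun hc => h hc.symm)]
  rw [harg]

lemma mkEnd_matrix (T : Module.End F (Mnk n k → F)) :
    mkEnd (fun p : Mnk n k × Mnk n k => T (dlt p.2) p.1) = T := by
  apply LinearMap.ext
  intro f
  funext a
  show ∑ b, T (dlt b) a * f b = T f a
  have hf : f = ∑ b : Mnk n k, f b • (dlt b : Mnk n k → F) := by
    funext x
    rw [Finset.sum_apply]
    simp only [Pi.smul_apply, dlt, smul_eq_mul, mul_ite, mul_one, mul_zero]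
    rw [Finset.sum_ite_eq' Finset.univ x f]
    simp
  conv_rhs => rw [hf]
  rw [map_sum]
  rw [Finset.sum_apply]
  apply Finset.sum_congr rfl
  intro b _
  rw [LinearMap.map_smul]
  simp [mul_comm]

lemma matrix_mkEnd (K : Mnk n k × Mnk n k → F) :
    (fun p : Mnk n k × Mnk n k => (mkEnd K) (dlt p.2) p.1) = K := by
  funext p
  show ∑ b, K (p.1, b) * dlt p.2 b = K p
  unfold dlt
  rw [Finset.sum_eq_single p.2]
  · simp
  · intro b _ hb
    rw [if_neg (fun h => hb h.symm), mul_zero]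
  · intro h
    exact absurd (Finset.mem_univ _) h

/-- step 1 equivalence -/
noncomputable def e1 : EquivariantEnd F n k ≃ₗ[F] InvK F n k where
  toFun T := ⟨fun p => T.1 (dlt p.2) p.1, matrix_mem T.2⟩
  map_add' T S := rfl
  map_smul' c T := rfl
  invFun K := ⟨mkEnd K.1, mkEnd_mem K.2⟩
  left_inv T := Subtype.ext (mkEnd_matrix T.1)
  right_inv K := Subtype.ext (matrix_mkEnd K.1)

/-- step 2 equivalence -/
noncomputable def e2 : InvK F n k ≃ₗ[F] (Quotient (mnkRel n k) → F) where
  toFun K := Quotient.lift K.1 (fun p q hpq => by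
    obtain ⟨w, hw⟩ := hpq
    rw [← hw]
    exact (K.2 w p).symm)
  map_add' K L := by
    funext q
    induction q using Quotient.ind
    rfl
  map_smul' c K := by
    funext q
    induction q using Quotient.ind
    rfl
  invFun g := ⟨fun p => g ⟦p⟧, fun w p =>
    congrArg g (Quotient.sound (⟨w, rfl⟩ : (mnkRel n k).r p (permA w p.1, permA w p.2))).symm⟩
  left_inv K := Subtype.ext (funext fun p => rfl)
  right_inv g := by
    funext q
    induction q using Quotient.ind
    rfl



variable {n k : ℕ}

lemma sum_filter_ne_zero (m : Multiset (ℕ × ℕ)) (f : ℕ × ℕ → ℕ) (hf : f (0,0) = 0) :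
    ((m.filter fun p => p ≠ (0,0)).map f).sum = (m.map f).sum := by
  conv_rhs => rw [← Multiset.filter_add_not (fun p => p ≠ (0,0)) m]
  rw [Multiset.map_add, Multiset.sum_add]
  have : ((m.filter fun p => ¬ p ≠ (0,0)).map f).sum = 0 := by
    apply Multiset.sum_eq_zero
    intro x hx
    obtain ⟨p, hp, rfl⟩ := Multiset.mem_map.1 hx
    have := (Multiset.mem_filter.1 hp).2
    simp only [ne_eq, not_not] at this
    rw [this, hf]
  omega

lemma map_fst_univ (a b : Mnk n k) :
    ((Multiset.map (fun i => (a.1 i, b.1 i)) Finset.univ.val).map Prod.fst).sum = k := by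
  rw [Multiset.map_map]
  have : (Prod.fst ∘ fun i => (a.1 i, b.1 i)) = a.1 := rfl
  rw [this]; exact a.2

lemma map_snd_univ (a b : Mnk n k) :
    ((Multiset.map (fun i => (a.1 i, b.1 i)) Finset.univ.val).map Prod.snd).sum = k := by
  rw [Multiset.map_map]
  have : (Prod.snd ∘ fun i => (a.1 i, b.1 i)) = b.1 := rfl
  rw [this]; exact b.2

lemma isMSP_epairs (a b : Mnk n k) : IsMSP k (Epairs a b) := by
  refine ⟨by simp [Epairs, Multiset.mem_filter], ?_, ?_⟩
  · rw [Epairs, sum_filter_ne_zero _ _ rfl, map_fst_univ a b]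
  · rw [Epairs, sum_filter_ne_zero _ _ rfl, map_snd_univ a b]

lemma map_univ_perm {α : Type*} (f : Fin n → α) (w : Equiv.Perm (Fin n)) :
    Multiset.map (fun i => f (w i)) Finset.univ.val = Multiset.map f Finset.univ.val := by
  have h1 : Finset.univ.val.map ⇑w = Finset.univ.val := by
    conv_rhs => rw [← Finset.map_univ_equiv w]
    rfl
  conv_rhs => rw [← h1]
  rw [Multiset.map_map]
  rfl

lemma epairs_perm (w : Equiv.Perm (Fin n)) (a b : Mnk n k) :
    Epairs (permA w a) (permA w b) = Epairs a b := by
  unfold Epairs permA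
  congr 1
  exact map_univ_perm (fun i => (a.1 i, b.1 i)) w⁻¹

lemma full_multiset_eq {a b a' b' : Mnk n k} (h : Epairs a b = Epairs a' b') :
    Multiset.map (fun i => (a.1 i, b.1 i)) Finset.univ.val
      = Multiset.map (fun i => (a'.1 i, b'.1 i)) Finset.univ.val := by
  set m0 := Multiset.map (fun i => (a.1 i, b.1 i)) Finset.univ.val with hm0
  set m1 := Multiset.map (fun i => (a'.1 i, b'.1 i)) Finset.univ.val with hm1
  have hc0 : Multiset.card m0 = n := by simp [hm0]
  have hc1 : Multiset.card m1 = n := by simp [hm1]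
  have key : ∀ m : Multiset (ℕ × ℕ),
      m.filter (fun p => ¬ p ≠ (0,0)) =
        Multiset.replicate (Multiset.card m - Multiset.card (m.filter fun p => p ≠ (0,0))) (0,0) := by
    intro m
    have hcard : Multiset.card (m.filter fun p => ¬ p ≠ (0,0))
        = Multiset.card m - Multiset.card (m.filter fun p => p ≠ (0,0)) := by
      have := congrArg Multiset.card (Multiset.filter_add_not (fun p => p ≠ (0,0)) m)
      rw [Multiset.card_add] at this
      omega
    rw [← hcard]
    rw [Multiset.eq_replicate_card]
    intro p hp
    have := (Multiset.mem_filter.1 hp).2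
    simpa using this
  have h0 := Multiset.filter_add_not (fun p => p ≠ (0,0)) m0
  have h1 := Multiset.filter_add_not (fun p => p ≠ (0,0)) m1
  rw [← h0, ← h1, key m0, key m1]
  show m0.filter _ + _ = m1.filter _ + _
  rw [show m0.filter (fun p => p ≠ (0,0)) = Epairs a b from rfl,
      show m1.filter (fun p => p ≠ (0,0)) = Epairs a' b' from rfl, h, hc0, hc1]

lemma exists_perm {α : Type*} (e : α ↪ ℕ) {f g : Fin n → α}
    (h : Multiset.map f Finset.univ.val = Multiset.map g Finset.univ.val) :
    ∃ σ : Equiv.Perm (Fin n), g = f ∘ σ := by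
  set F := ⇑e ∘ f with hF
  set G := ⇑e ∘ g with hG
  have hFG : (List.ofFn F : Multiset ℕ) = (List.ofFn G : Multiset ℕ) := by
    rw [← Fin.univ_val_map, ← Fin.univ_val_map]
    show Multiset.map (⇑e ∘ f) _ = Multiset.map (⇑e ∘ g) _
    rw [← Multiset.map_map, ← Multiset.map_map, h]
  have hperm : List.Perm (List.ofFn F) (List.ofFn G) := Multiset.coe_eq_coe.1 hFG
  set σf := Tuple.sort F
  set σg := Tuple.sort G
  have key : F ∘ σf = G ∘ σg :=
    List.ofFn_injective (List.Perm.eq_of_sortedLE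
      (Tuple.monotone_sort F).sortedLE_ofFn (Tuple.monotone_sort G).sortedLE_ofFn
      ((σf.ofFn_comp_perm F).trans (hperm.trans (σg.ofFn_comp_perm G).symm)))
  have key2 : f ∘ σf = g ∘ σg := by
    funext i
    apply e.injective
    exact congrFun key i
  refine ⟨σg.symm.trans σf, ?_⟩
  funext i
  have := congrFun key2 (σg.symm i)
  simp only [Function.comp_apply, Equiv.apply_symm_apply] at this
  simpa [Function.comp] using this.symm

lemma epairs_inj {a b a' b' : Mnk n k} (h : Epairs a b = Epairs a' b') :
    ∃ w : Equiv.Perm (Fin n), permA w a = a' ∧ permA w b = b' := by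
  have hfull := full_multiset_eq h
  obtain ⟨σ, hσ⟩ := exists_perm ⟨fun p => Nat.pairEquiv p, Nat.pairEquiv.injective⟩ hfull
  refine ⟨σ⁻¹, ?_, ?_⟩
  · apply Subtype.ext; funext i
    have := congrFun hσ i
    simp only [Function.comp_apply] at this
    have := congrArg Prod.fst this
    simpa [permA] using this.symm
  · apply Subtype.ext; funext i
    have := congrFun hσ i
    simp only [Function.comp_apply] at this
    have := congrArg Prod.snd this
    simpa [permA] using this.symm

lemma epairs_surj {m : Multiset (ℕ × ℕ)} (hm : IsMSP k m)
    (hcard : Multiset.card m ≤ n) : ∃ a b : Mnk n k, Epairs a b = m := by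
  obtain ⟨h0, h1, h2⟩ := hm
  set l : List (ℕ × ℕ) := m.toList ++ List.replicate (n - Multiset.card m) (0, 0) with hl
  have hlen : l.length = n := by
    simp only [hl, List.length_append, Multiset.length_toList, List.length_replicate]
    omega
  set f : Fin n → ℕ × ℕ := fun i => l.get (Fin.cast hlen.symm i) with hf
  have hofn : List.ofFn f = l := by
    apply List.ext_getElem (by simp [hlen])
    intro i hi1 hi2
    simp [hf, List.get]
  have hcoe : (l : Multiset (ℕ × ℕ)) = m + Multiset.replicate (n - Multiset.card m) (0, 0) := by
    rw [hl, ← Multiset.coe_add, Multiset.coe_toList, Multiset.coe_replicate]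
  have hmul : Multiset.map f Finset.univ.val = m + Multiset.replicate (n - Multiset.card m) (0, 0) := by
    rw [Fin.univ_val_map, hofn, hcoe]
  have hmem : ∀ p ∈ m, p ≠ ((0 : ℕ), (0 : ℕ)) := fun p hp he => h0 (he ▸ hp)
  have hsum1 : ∑ i, (f i).1 = k := by
    have : ∑ i, (f i).1 = ((Multiset.map f Finset.univ.val).map Prod.fst).sum := by
      rw [Multiset.map_map]; rfl
    rw [this, hmul, Multiset.map_add, Multiset.sum_add, h1, Multiset.map_replicate,
      Multiset.sum_replicate]
    simp
  have hsum2 : ∑ i, (f i).2 = k := by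
    have : ∑ i, (f i).2 = ((Multiset.map f Finset.univ.val).map Prod.snd).sum := by
      rw [Multiset.map_map]; rfl
    rw [this, hmul, Multiset.map_add, Multiset.sum_add, h2, Multiset.map_replicate,
      Multiset.sum_replicate]
    simp
  refine ⟨⟨fun i => (f i).1, hsum1⟩, ⟨fun i => (f i).2, hsum2⟩, ?_⟩
  unfold Epairs
  have : (Multiset.map (fun i => ((f i).1, (f i).2)) Finset.univ.val) = Multiset.map f Finset.univ.val := by
    congr 1
  rw [this, hmul, Multiset.filter_add]
  rw [Multiset.filter_eq_self.2 hmem]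
  have : Multiset.filter (fun p => p ≠ ((0:ℕ),(0:ℕ))) (Multiset.replicate (n - Multiset.card m) ((0:ℕ),(0:ℕ))) = 0 := by
    apply Multiset.filter_eq_nil.2
    intro p hp
    simp [Multiset.eq_of_mem_replicate hp]
  rw [this, add_zero]

lemma msp_card_le {k : ℕ} {m : Multiset (ℕ × ℕ)} (hm : IsMSP k m) :
    Multiset.card m ≤ 2 * k := by
  obtain ⟨h0, h1, h2⟩ := hm
  have hsum : (m.map fun p => p.1 + p.2).sum = 2 * k := by
    rw [Multiset.sum_map_add, h1, h2]; ring
  have hcard : Multiset.card m = (m.map fun _ => 1).sum := by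
    simp [Multiset.map_const', Multiset.sum_replicate]
  rw [hcard, ← hsum]
  apply Multiset.sum_map_le_sum_map
  intro p hp
  have : p ≠ (0, 0) := fun h => h0 (h ▸ hp)
  rcases p with ⟨x, y⟩
  by_contra hc
  exact this (by simp at hc ⊢; omega)


end Stmt5Aux

/-- Every multiset partition of `{1^k,1'^k}` has rank at most `2k`; hence for `n ≥ 2k` the
dimension of `End_{S_n}(Sym^k(F^n))` equals the total number of multiset partitions of
`{1^k,1'^k}`. -/

theorem stmt5 (F : Type) [Field F] (n k : ℕ) (hn : 0 < n) (hk : 0 < k) :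
    (∀ m : Multiset (ℕ × ℕ), IsMSP k m → Multiset.card m ≤ 2 * k) ∧
    (2 * k ≤ n →
      Module.finrank F (EquivariantEnd F n k) =
        Nat.card {m : Multiset (ℕ × ℕ) // IsMSP k m}) := by
  classical
  refine ⟨fun m hm => Stmt5Aux.msp_card_le hm, fun h2k => ?_⟩
  have e := (Stmt5Aux.e1 (F := F) (n := n) (k := k)).trans
    (Stmt5Aux.e2 (F := F) (n := n) (k := k))
  rw [e.finrank_eq]
  haveI : Fintype (Quotient (Stmt5Aux.mnkRel n k)) := Fintype.ofFinite _
  rw [Module.finrank_fintype_fun_eq_card, ← Nat.card_eq_fintype_card]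
  apply Nat.card_congr
  refine Equiv.ofBijective (Quotient.lift
    (fun p : Mnk n k × Mnk n k =>
      (⟨Epairs p.1 p.2, Stmt5Aux.isMSP_epairs p.1 p.2⟩ : {m : Multiset (ℕ × ℕ) // IsMSP k m}))
    ?_) ⟨?_, ?_⟩
  · rintro p q ⟨w, hw⟩
    rw [← hw]
    exact Subtype.ext (Stmt5Aux.epairs_perm w p.1 p.2).symm
  · intro x y
    induction x using Quotient.ind with | _ p =>
    induction y using Quotient.ind with | _ q =>
    intro h
    have hE : Epairs p.1 p.2 = Epairs q.1 q.2 := congrArg Subtype.val h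
    obtain ⟨w, hw1, hw2⟩ := Stmt5Aux.epairs_inj hE
    exact Quotient.sound ⟨w, by rw [hw1, hw2]⟩
  · rintro ⟨m, hm⟩
    obtain ⟨a, b, hE⟩ := Stmt5Aux.epairs_surj hm ((Stmt5Aux.msp_card_le hm).trans h2k)
    exact ⟨⟦(a, b)⟧, Subtype.ext hE⟩
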